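/- Let (Ω, F, P) be a probability space and 𝒳 = L∞(Ω, F, P). A risk measure ρ : 𝒳 → ℝ is star-shaped if and only if there exist a nonempty collection Γ and, for each γ ∈ Γ, a function α_γ : 𝒫 → [0, ∞] with inf_{Q∈𝒫} α_γ(Q) = 0, such that for every X ∈ 𝒳, ρ(X) = min_{γ∈Γ} sup_{Q∈𝒫} { E_Q[X] − α_γ(Q) }, where the minimum over γ is attained and 𝒫 denotes the set of all (countably additive) probability measures on (Ω, F) absolutely continuous with respect to P. -/

import Mathlib

set_option linter.unusedSectionVars false

open MeasureTheory

variable {Ω : Type*}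

/-- The constant function, as an element of `L∞`. -/
noncomputable def Lconst [MeasurableSpace Ω] (P : Measure Ω) [IsProbabilityMeasure P]
    (m : ℝ) : Lp ℝ ⊤ P :=
  (memLp_const m).toLp (fun _ => m)

def IsRiskMeasure [MeasurableSpace Ω] (P : Measure Ω) [IsProbabilityMeasure P]
    (ρ : Lp ℝ ⊤ P → ℝ) : Prop :=
  (∀ X Y : Lp ℝ ⊤ P, Y ≤ X → ρ Y ≤ ρ X) ∧
  (∀ (X : Lp ℝ ⊤ P) (m : ℝ), ρ (X - Lconst P m) = ρ X - m) ∧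
  ρ 0 = 0

def IsStarShaped [MeasurableSpace Ω] (P : Measure Ω) [IsProbabilityMeasure P]
    (ρ : Lp ℝ ⊤ P → ℝ) : Prop :=
  ∀ (X : Lp ℝ ⊤ P) (l : ℝ), 1 < l → l * ρ X ≤ ρ (l • X)

section helpers

variable [MeasurableSpace Ω] (P : Measure Ω) [IsProbabilityMeasure P]

lemma Lconst_coeFn (m : ℝ) : (Lconst P m : Ω → ℝ) =ᵐ[P] fun _ => m :=
  (memLp_const m).coeFn_toLp

variable {P}
variable {ρ : Lp ℝ ⊤ P → ℝ} (hρ : IsRiskMeasure P ρ)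
include hρ

lemma rho_const (m : ℝ) : ρ (Lconst P m) = m := by
  have h := hρ.2.1 (Lconst P m) m
  simp only [sub_self] at h
  rw [hρ.2.2] at h
  linarith

/-- translation : ρ (X + const m) = ρ X + m -/
lemma rho_add_const (X : Lp ℝ ⊤ P) (m : ℝ) : ρ (X + Lconst P m) = ρ X + m := by
  have h := hρ.2.1 (X + Lconst P m) m
  simp only [add_sub_cancel_right] at h
  linarith

/-- if X ≤ c a.e. then ρ X ≤ c -/
lemma rho_le_of_ae_le {X : Lp ℝ ⊤ P} {c : ℝ} (h : ∀ᵐ ω ∂P, X ω ≤ c) : ρ X ≤ c := by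
  have hle : X ≤ Lconst P c := by
    rw [← Lp.coeFn_le]
    filter_upwards [h, Lconst_coeFn P c] with ω h1 h2
    rw [h2]; exact h1
  calc ρ X ≤ ρ (Lconst P c) := hρ.1 _ _ hle
  _ = c := rho_const hρ c

lemma le_rho_of_ae_le {X : Lp ℝ ⊤ P} {c : ℝ} (h : ∀ᵐ ω ∂P, c ≤ X ω) : c ≤ ρ X := by
  have hle : Lconst P c ≤ X := by
    rw [← Lp.coeFn_le]
    filter_upwards [h, Lconst_coeFn P c] with ω h1 h2
    rw [h2]; exact h1
  calc c = ρ (Lconst P c) := (rho_const hρ c).symm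
  _ ≤ ρ X := hρ.1 _ _ hle

end helpers

section measureQ

variable [MeasurableSpace Ω] {P : Measure Ω} [IsProbabilityMeasure P]

/-- a.e.-P bound for an L∞ element -/
lemma Linfty_ae_bound (X : Lp ℝ ⊤ P) : ∀ᵐ ω ∂P, ‖X ω‖ ≤ (eLpNorm (X : Ω → ℝ) ⊤ P).toReal := by
  have hfin : eLpNorm (X : Ω → ℝ) ⊤ P < ⊤ := (Lp.memLp X).2
  rw [eLpNorm_exponent_top] at hfin
  filter_upwards [ae_le_eLpNormEssSup (f := (X : Ω → ℝ)) (μ := P)] with ω h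
  have := ENNReal.toReal_mono hfin.ne h
  simpa [eLpNorm_exponent_top] using this

/-- integrability of an L∞ element w.r.t. any prob measure ≪ P -/
lemma integrable_of_mem_Linfty (X : Lp ℝ ⊤ P) {Q : Measure Ω} [IsProbabilityMeasure Q]
    (hQ : Q ≪ P) : Integrable (fun ω => X ω) Q :=
  Integrable.mono' (integrable_const _)
    ((Lp.stronglyMeasurable X).aestronglyMeasurable)
    (hQ.ae_le (Linfty_ae_bound X))


lemma cond_prob {A : Set Ω} (hA : MeasurableSet A) (h0 : P A ≠ 0) :
    IsProbabilityMeasure ((P A)⁻¹ • P.restrict A) := by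
  constructor
  rw [Measure.smul_apply, Measure.restrict_apply MeasurableSet.univ, Set.univ_inter,
    smul_eq_mul, ENNReal.inv_mul_cancel h0 (measure_ne_top P A)]

lemma cond_ac {A : Set Ω} (hA : MeasurableSet A) :
    ((P A)⁻¹ • P.restrict A) ≪ P := by
  exact (Measure.absolutelyContinuous_of_le Measure.restrict_le_self).smul_left _

lemma cond_integral_ge {A : Set Ω} (hA : MeasurableSet A) (h0 : P A ≠ 0) {f : Ω → ℝ}
    (hf : Integrable f P) {c : ℝ} (hc : ∀ ω ∈ A, c ≤ f ω) :
    c ≤ ∫ ω, f ω ∂((P A)⁻¹ • P.restrict A) := by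
  rw [integral_smul_measure]
  have h1 : c * (P A).toReal ≤ ∫ x in A, f x ∂P :=
    setIntegral_ge_of_const_le_real hA (measure_ne_top P A) hc hf.integrableOn
  have hpos : 0 < (P A).toReal := ENNReal.toReal_pos h0 (measure_ne_top P A)
  have : ((P A)⁻¹).toReal = ((P A).toReal)⁻¹ := ENNReal.toReal_inv _
  rw [this, smul_eq_mul, inv_mul_eq_div, le_div_iff₀ hpos]
  exact h1

lemma cond_integral_le {A : Set Ω} (hA : MeasurableSet A) (h0 : P A ≠ 0) {f : Ω → ℝ}
    (hf : Integrable f P) {c : ℝ} (hc : ∀ ω ∈ A, f ω ≤ c) :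
    ∫ ω, f ω ∂((P A)⁻¹ • P.restrict A) ≤ c := by
  have := cond_integral_ge hA h0 hf.neg (c := -c) (fun ω hω => by
    simpa using neg_le_neg (hc ω hω))
  simp only [Pi.neg_apply, integral_neg] at this
  linarith

end measureQ

section probac

variable [MeasurableSpace Ω] {P : Measure Ω} [IsProbabilityMeasure P]

lemma exists_Q_ge (W : Lp ℝ ⊤ P) {c : ℝ} (h : P {ω | c < W ω} ≠ 0) :
    ∃ Q : {Q : Measure Ω // IsProbabilityMeasure Q ∧ Q ≪ P},
      c ≤ ∫ ω, W ω ∂(Q : Measure Ω) := by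
  set A := {ω | c < W ω} with hAdef
  have hA : MeasurableSet A :=
    measurableSet_lt measurable_const (Lp.stronglyMeasurable W).measurable
  exact ⟨⟨(P A)⁻¹ • P.restrict A, cond_prob hA h, cond_ac hA⟩,
    cond_integral_ge hA h (MemLp.integrable le_top (Lp.memLp W)) (fun ω hω => le_of_lt hω)⟩

lemma exists_Q_le (W : Lp ℝ ⊤ P) {c : ℝ} (h : P {ω | W ω < c} ≠ 0) :
    ∃ Q : {Q : Measure Ω // IsProbabilityMeasure Q ∧ Q ≪ P},
      ∫ ω, W ω ∂(Q : Measure Ω) ≤ c := by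
  set A := {ω | W ω < c} with hAdef
  have hA : MeasurableSet A :=
    measurableSet_lt (Lp.stronglyMeasurable W).measurable measurable_const
  exact ⟨⟨(P A)⁻¹ • P.restrict A, cond_prob hA h, cond_ac hA⟩,
    cond_integral_le hA h (MemLp.integrable le_top (Lp.memLp W)) (fun ω hω => le_of_lt hω)⟩

lemma ae_le_of_null (W : Lp ℝ ⊤ P) {c : ℝ} (h : P {ω | c < W ω} = 0) :
    ∀ᵐ ω ∂P, W ω ≤ c := by
  rw [ae_iff]
  simpa [not_le] using h

lemma ae_ge_of_null (W : Lp ℝ ⊤ P) {c : ℝ} (h : P {ω | W ω < c} = 0) :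
    ∀ᵐ ω ∂P, c ≤ W ω := by
  rw [ae_iff]
  simpa [not_le] using h

lemma integral_sub_smul (X X₀ : Lp ℝ ⊤ P) (t : ℝ) {Q : Measure Ω} [IsProbabilityMeasure Q]
    (hQ : Q ≪ P) :
    ∫ ω, (X - t • X₀ : Lp ℝ ⊤ P) ω ∂Q = ∫ ω, X ω ∂Q - t * ∫ ω, X₀ ω ∂Q := by
  have h1 : (X - t • X₀ : Lp ℝ ⊤ P) =ᵐ[P] fun ω => X ω - t * X₀ ω := by
    filter_upwards [Lp.coeFn_sub X (t • X₀), Lp.coeFn_smul t X₀] with ω h1 h2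
    simp only [h1, Pi.sub_apply, h2, Pi.smul_apply, smul_eq_mul]
  rw [integral_congr_ae (hQ.ae_le h1),
    integral_sub (integrable_of_mem_Linfty X hQ) ((integrable_of_mem_Linfty X₀ hQ).const_mul t),
    integral_const_mul]

lemma integral_smul_coe (X : Lp ℝ ⊤ P) (t : ℝ) {Q : Measure Ω} [IsProbabilityMeasure Q]
    (hQ : Q ≪ P) :
    ∫ ω, (t • X : Lp ℝ ⊤ P) ω ∂Q = t * ∫ ω, X ω ∂Q := by
  have h1 : (t • X : Lp ℝ ⊤ P) =ᵐ[P] fun ω => t * X ω := by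
    filter_upwards [Lp.coeFn_smul t X] with ω h2
    simp only [h2, Pi.smul_apply, smul_eq_mul]
  rw [integral_congr_ae (hQ.ae_le h1), integral_const_mul]

end probac

section core

variable [MeasurableSpace Ω] {P : Measure Ω} [IsProbabilityMeasure P]
variable {ρ : Lp ℝ ⊤ P → ℝ} (hρ : IsRiskMeasure P ρ) (hss : IsStarShaped P ρ)
include hρ

lemma rho_smul_nonpos (hss : IsStarShaped P ρ) {t : ℝ} (ht0 : 0 ≤ t) (ht1 : t ≤ 1)
    {Y : Lp ℝ ⊤ P} (hY : ρ Y ≤ 0) : ρ (t • Y) ≤ 0 := by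
  rcases eq_or_lt_of_le ht0 with h0 | h0
  · rw [← h0, zero_smul]; exact le_of_eq hρ.2.2
  rcases eq_or_lt_of_le ht1 with h1 | h1
  · rw [h1, one_smul]; exact hY
  have hl : 1 < 1 / t := (one_lt_div h0).2 h1
  have := hss (t • Y) (1 / t) hl
  rw [smul_smul, one_div, inv_mul_cancel₀ (ne_of_gt h0), one_smul] at this
  by_contra hc
  push_neg at hc
  nlinarith [mul_pos (inv_pos.2 h0) hc]

/-- Star-shape consequence: a.e. domination by an affine combination bounds ρ. -/
lemma rho_le_affine (hss : IsStarShaped P ρ) (X X₀ : Lp ℝ ⊤ P) {t c : ℝ}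
    (ht0 : 0 ≤ t) (ht1 : t ≤ 1) (h : ∀ᵐ ω ∂P, X ω ≤ t * X₀ ω + c) :
    ρ X ≤ c + t * ρ X₀ := by
  set Y : Lp ℝ ⊤ P := X₀ - Lconst P (ρ X₀) with hYdef
  have hY : ρ Y = 0 := by rw [hYdef, hρ.2.1]; ring
  have hle : X ≤ t • Y + Lconst P (c + t * ρ X₀) := by
    rw [← Lp.coeFn_le]
    filter_upwards [h, Lp.coeFn_add (t • Y) (Lconst P (c + t * ρ X₀)),
      Lp.coeFn_smul t Y, Lp.coeFn_sub X₀ (Lconst P (ρ X₀)),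
      Lconst_coeFn P (ρ X₀), Lconst_coeFn P (c + t * ρ X₀)] with ω h1 h2 h3 h4 h5 h6
    rw [h2, Pi.add_apply, h3, Pi.smul_apply, h4, Pi.sub_apply, h5, h6, smul_eq_mul]
    ring_nf
    nlinarith [h1]
  have h7 := hρ.1 _ _ hle
  rw [rho_add_const hρ] at h7
  have h8 := rho_smul_nonpos hρ hss ht0 ht1 (le_of_eq hY)
  linarith

omit hρ in
/-- mixtures of elements of 𝒫 -/
lemma mix_lemma (Q₁ Q₂ : {Q : Measure Ω // IsProbabilityMeasure Q ∧ Q ≪ P}) {a b : ℝ}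
    (ha : 0 ≤ a) (hb : 0 ≤ b) (hab : a + b = 1) :
    ∃ M : {Q : Measure Ω // IsProbabilityMeasure Q ∧ Q ≪ P},
      ∀ W : Lp ℝ ⊤ P, ∫ ω, W ω ∂(M : Measure Ω)
        = a * ∫ ω, W ω ∂(Q₁ : Measure Ω) + b * ∫ ω, W ω ∂(Q₂ : Measure Ω) := by
  obtain ⟨Q₁, hp₁, hac₁⟩ := Q₁
  obtain ⟨Q₂, hp₂, hac₂⟩ := Q₂
  have := hp₁; have := hp₂
  set M : Measure Ω := ENNReal.ofReal a • Q₁ + ENNReal.ofReal b • Q₂ with hM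
  have hprob : IsProbabilityMeasure M := by
    constructor
    simp only [hM, Measure.add_apply, Measure.smul_apply, measure_univ, smul_eq_mul, mul_one]
    rw [← ENNReal.ofReal_add ha hb, hab, ENNReal.ofReal_one]
  have hac : M ≪ P := Measure.AbsolutelyContinuous.add_left (hac₁.smul_left _) (hac₂.smul_left _)
  refine ⟨⟨M, hprob, hac⟩, fun W => ?_⟩
  have h₁ : Integrable (fun ω => W ω) (ENNReal.ofReal a • Q₁) :=
    (integrable_of_mem_Linfty W hac₁).smul_measure ENNReal.ofReal_ne_top
  have h₂ : Integrable (fun ω => W ω) (ENNReal.ofReal b • Q₂) :=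
    (integrable_of_mem_Linfty W hac₂).smul_measure ENNReal.ofReal_ne_top
  simp only [hM]
  rw [integral_add_measure h₁ h₂, integral_smul_measure, integral_smul_measure,
    ENNReal.toReal_ofReal ha, ENNReal.toReal_ofReal hb, smul_eq_mul, smul_eq_mul]

/-- The separation/minimax step. -/
lemma exists_Q_both (hss : IsStarShaped P ρ) (X X₀ : Lp ℝ ⊤ P) {ε : ℝ} (hε : 0 < ε) :
    ∃ Q : {Q : Measure Ω // IsProbabilityMeasure Q ∧ Q ≪ P},
      ρ X - ε ≤ ∫ ω, X ω ∂(Q : Measure Ω) ∧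
      ρ X - ε ≤ ∫ ω, X ω ∂(Q : Measure Ω) - ∫ ω, X₀ ω ∂(Q : Measure Ω) + ρ X₀ := by
  by_contra hcon
  push_neg at hcon
  set a : ℝ := ρ X - ε with hadef
  set F : {Q : Measure Ω // IsProbabilityMeasure Q ∧ Q ≪ P} → ℝ × ℝ :=
    fun Q => (∫ ω, X ω ∂(Q : Measure Ω),
      ∫ ω, X ω ∂(Q : Measure Ω) - ∫ ω, X₀ ω ∂(Q : Measure Ω) + ρ X₀) with hFdef
  set S : Set (ℝ × ℝ) := {p | a < p.1 ∧ a < p.2} with hSdef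
  set C : Set (ℝ × ℝ) := Set.range F with hCdef
  have hdisj : Disjoint S C := by
    rw [Set.disjoint_left]
    rintro p ⟨hp1, hp2⟩ ⟨Q, rfl⟩
    have := hcon Q
    simp only [hFdef] at hp1 hp2
    exact absurd (this hp1.le) (not_lt.2 hp2.le)
  have hSconv : Convex ℝ S := by
    have : S = (LinearMap.fst ℝ ℝ ℝ) ⁻¹' (Set.Ioi a) ∩ (LinearMap.snd ℝ ℝ ℝ) ⁻¹' (Set.Ioi a) := by
      ext p; simp [hSdef, Set.mem_Ioi]
    rw [this]
    exact ((convex_Ioi a).linear_preimage _).inter ((convex_Ioi a).linear_preimage _)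
  have hSopen : IsOpen S := by
    exact (isOpen_lt continuous_const continuous_fst).inter
      (isOpen_lt continuous_const continuous_snd)
  have hCconv : Convex ℝ C := by
    rintro p ⟨Q₁, rfl⟩ q ⟨Q₂, rfl⟩ α β hα hβ hαβ
    obtain ⟨M, hMint⟩ := mix_lemma Q₁ Q₂ hα hβ hαβ
    refine ⟨M, Prod.ext ?_ ?_⟩
    · simp only [hFdef, Prod.fst_add, Prod.smul_fst, smul_eq_mul]
      rw [hMint X]
    · simp only [hFdef, Prod.snd_add, Prod.smul_snd, smul_eq_mul]
      rw [hMint X, hMint X₀]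
      linear_combination (-(ρ X₀)) * hαβ
  obtain ⟨f, u, hfS, hfC⟩ := geometric_hahn_banach_open hSconv hSopen hCconv hdisj
  set β₁ : ℝ := f (1, 0) with hβ₁def
  set β₂ : ℝ := f (0, 1) with hβ₂def
  have hrepr : ∀ p : ℝ × ℝ, f p = p.1 * β₁ + p.2 * β₂ := by
    intro p
    have hp : p = p.1 • ((1 : ℝ), (0 : ℝ)) + p.2 • ((0 : ℝ), (1 : ℝ)) := by
      ext <;> simp
    rw [hp, map_add, f.map_smul, f.map_smul]
    simp [smul_eq_mul, hβ₁def, hβ₂def]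
  have hβ₁ : β₁ ≤ 0 := by
    by_contra hpos
    push_neg at hpos
    set s : ℝ := max (a + 1) ((u - (a + 1) * β₂ + 1) / β₁) with hsdef
    have hs1 : a < s := lt_of_lt_of_le (by linarith) (le_max_left _ _)
    have := hfS (s, a + 1) ⟨hs1, by simp⟩
    rw [hrepr] at this
    have h2 : ((u - (a + 1) * β₂ + 1) / β₁) * β₁ ≤ s * β₁ :=
      mul_le_mul_of_nonneg_right (le_max_right _ _) hpos.le
    rw [div_mul_cancel₀ _ (ne_of_gt hpos)] at h2
    simp only at this
    linarith
  have hβ₂ : β₂ ≤ 0 := by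
    by_contra hpos
    push_neg at hpos
    set s : ℝ := max (a + 1) ((u - (a + 1) * β₁ + 1) / β₂) with hsdef
    have hs1 : a < s := lt_of_lt_of_le (by linarith) (le_max_left _ _)
    have := hfS (a + 1, s) ⟨by simp, hs1⟩
    rw [hrepr] at this
    have h2 : ((u - (a + 1) * β₁ + 1) / β₂) * β₂ ≤ s * β₂ :=
      mul_le_mul_of_nonneg_right (le_max_right _ _) hpos.le
    rw [div_mul_cancel₀ _ (ne_of_gt hpos)] at h2
    simp only at this
    linarith
  set σ : ℝ := β₁ + β₂ with hσdef
  have hCP : F ⟨P, ‹_›, Measure.AbsolutelyContinuous.rfl⟩ ∈ C := ⟨_, rfl⟩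
  rcases eq_or_lt_of_le (show σ ≤ 0 by simp [hσdef]; linarith) with hσ0 | hσneg
  · -- σ = 0 : β₁ = β₂ = 0, contradiction
    have hb1 : β₁ = 0 := by simp [hσdef] at hσ0; linarith
    have hb2 : β₂ = 0 := by simp [hσdef] at hσ0; linarith
    have h1 := hfS (a + 1, a + 1) ⟨by simp, by simp⟩
    have h2 := hfC _ hCP
    rw [hrepr] at h1 h2
    simp [hb1, hb2] at h1 h2
    linarith
  · -- σ < 0
    have hσ : σ < 0 := hσneg
    set t : ℝ := β₂ / σ with htdef
    have htσ : t * σ = β₂ := div_mul_cancel₀ _ (ne_of_lt hσ)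
    have h1t : (1 - t) * σ = β₁ := by
      have : σ = β₁ + β₂ := hσdef
      nlinarith [htσ]
    have ht0 : 0 ≤ t := div_nonneg_iff.2 (Or.inr ⟨hβ₂, hσ.le⟩)
    have ht1 : t ≤ 1 := by nlinarith [hβ₁, hσ, h1t]
    have hau : a * σ ≤ u := by
      by_contra hu
      push_neg at hu
      set δ : ℝ := (u - a * σ) / σ with hδdef
      have hδ : 0 < δ := div_pos_iff.2 (Or.inr ⟨by linarith, hσ⟩)
      have hδσ : δ * σ = u - a * σ := div_mul_cancel₀ _ (ne_of_lt hσ)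
      have hmem : ((a + δ, a + δ) : ℝ × ℝ) ∈ S := ⟨by simp [hSdef]; linarith, by simp [hSdef]; linarith⟩
      have hlt := hfS _ hmem
      rw [hrepr] at hlt
      simp only at hlt
      have hexp : (a + δ) * β₁ + (a + δ) * β₂ = a * σ + δ * σ := by
        rw [hσdef]; ring
      linarith
    have hQb : ∀ Q : {Q : Measure Ω // IsProbabilityMeasure Q ∧ Q ≪ P},
        ∫ ω, (X - t • X₀ : Lp ℝ ⊤ P) ω ∂(Q : Measure Ω) ≤ a - t * ρ X₀ := by
      intro Q
      haveI := Q.2.1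
      have h1 := hfC (F Q) ⟨Q, rfl⟩
      rw [hrepr] at h1
      simp only [hFdef] at h1
      set e : ℝ := ∫ ω, X ω ∂(Q : Measure Ω) with hedef
      set e₀ : ℝ := ∫ ω, X₀ ω ∂(Q : Measure Ω) with he₀def
      have h2 : e * β₁ + (e - e₀ + ρ X₀) * β₂ = σ * ((1 - t) * e + t * (e - e₀ + ρ X₀)) := by
        rw [← h1t, ← htσ]; ring
      rw [h2] at h1
      have hKa : (1 - t) * e + t * (e - e₀ + ρ X₀) ≤ a := by nlinarith [hau, h1, hσ]
      rw [integral_sub_smul X X₀ t Q.2.2, ← hedef, ← he₀def]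
      nlinarith [hKa]
    set Z : Lp ℝ ⊤ P := X - t • X₀ with hZdef
    set m₂ : ℝ := a - t * ρ X₀ + ε / 2 with hm₂def
    rcases eq_or_ne (P {ω | m₂ < Z ω}) 0 with hnull | hpos
    · have hae := ae_le_of_null Z hnull
      have haff : ∀ᵐ ω ∂P, X ω ≤ t * X₀ ω + m₂ := by
        filter_upwards [hae, Lp.coeFn_sub X (t • X₀), Lp.coeFn_smul t X₀] with ω h1 h2 h3
        rw [hZdef] at h1
        rw [h2, Pi.sub_apply, h3, Pi.smul_apply, smul_eq_mul] at h1
        linarith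
      have := rho_le_affine hρ hss X X₀ ht0 ht1 haff
      rw [hm₂def, hadef] at this
      linarith
    · obtain ⟨Q, hQ⟩ := exists_Q_ge Z hpos
      have := hQb Q
      rw [hm₂def] at hQ
      linarith

end core

section ereal

/-- key EReal computation for penalty terms -/
lemma EReal_term (e e₀ r : ℝ) :
    (e : EReal) - ((ENNReal.ofReal (e₀ - r) : ENNReal) : EReal)
      = ((min e (e - e₀ + r) : ℝ) : EReal) := by
  rw [EReal.coe_ennreal_ofReal]
  rcases le_or_gt e₀ r with h | h
  · rw [max_eq_right (by linarith : e₀ - r ≤ 0), min_eq_left (by linarith : e ≤ e - e₀ + r)]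
    simp
  · rw [max_eq_left (by linarith : (0:ℝ) ≤ e₀ - r),
      min_eq_right (by linarith : e - e₀ + r ≤ e)]
    rw [← EReal.coe_sub]
    norm_cast
    ring

lemma coe_le_iSup_coe {ι : Type*} (g : ι → ℝ) (r : ℝ)
    (h : ∀ ε : ℝ, 0 < ε → ∃ i, r - ε ≤ g i) :
    (r : EReal) ≤ ⨆ i, ((g i : ℝ) : EReal) := by
  rw [le_iSup_iff]
  intro b hb
  induction b using EReal.rec with
  | bot =>
    obtain ⟨i, _⟩ := h 1 one_pos
    exact absurd (hb i) (EReal.bot_lt_coe _).not_ge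
  | coe c =>
    rw [EReal.coe_le_coe_iff]
    by_contra hrc
    push_neg at hrc
    obtain ⟨i, hi⟩ := h ((r - c)/2) (by linarith)
    have := EReal.coe_le_coe_iff.1 (hb i)
    linarith
  | top => exact le_top

lemma iSup_coe_eq {ι : Type*} [Nonempty ι] (g : ι → ℝ) (r : ℝ)
    (hub : ∀ i, g i ≤ r) (h : ∀ ε : ℝ, 0 < ε → ∃ i, r - ε ≤ g i) :
    ⨆ i, ((g i : ℝ) : EReal) = (r : EReal) :=
  le_antisymm (iSup_le fun i => EReal.coe_le_coe_iff.2 (hub i)) (coe_le_iSup_coe g r h)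

end ereal

theorem star_shaped_iff_robust_representation
    [MeasurableSpace Ω] (P : Measure Ω) [IsProbabilityMeasure P]
    (ρ : Lp ℝ ⊤ P → ℝ) (hρ : IsRiskMeasure P ρ) :
    IsStarShaped P ρ ↔
      ∃ Γ : Set ({Q : Measure Ω // IsProbabilityMeasure Q ∧ Q ≪ P} → ENNReal),
        Γ.Nonempty ∧
        (∀ α ∈ Γ, (⨅ Q, α Q) = 0) ∧
        (∀ X : Lp ℝ ⊤ P,
          IsLeast
            {y : EReal | ∃ α ∈ Γ,
              y = ⨆ Q : {Q : Measure Ω // IsProbabilityMeasure Q ∧ Q ≪ P},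
                    ((∫ ω, X ω ∂(Q : Measure Ω) : ℝ) : EReal) - (α Q : EReal)}
            ((ρ X : ℝ) : EReal)) := by
  haveI hne : Nonempty {Q : Measure Ω // IsProbabilityMeasure Q ∧ Q ≪ P} :=
    ⟨⟨P, inferInstance, Measure.AbsolutelyContinuous.rfl⟩⟩
  constructor
  · intro hss
    refine ⟨Set.range (fun X₀ : Lp ℝ ⊤ P =>
        fun Q : {Q : Measure Ω // IsProbabilityMeasure Q ∧ Q ≪ P} =>
          ENNReal.ofReal ((∫ ω, X₀ ω ∂(Q : Measure Ω)) - ρ X₀)),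
      Set.range_nonempty _, ?_, ?_⟩
    · rintro α ⟨X₀, rfl⟩
      refine le_antisymm ?_ zero_le
      refine ENNReal.le_of_forall_pos_le_add fun ε hε _ => ?_
      rcases eq_or_ne (P {ω | X₀ ω < ρ X₀ + ε}) 0 with hnull | hpos
      · exfalso
        have h1 := le_rho_of_ae_le hρ (ae_ge_of_null X₀ hnull)
        have h2 : (0:ℝ) < ε := hε
        linarith
      · obtain ⟨Q, hQ⟩ := exists_Q_le X₀ hpos
        refine le_trans (iInf_le _ Q) ?_
        rw [zero_add]
        calc ENNReal.ofReal ((∫ ω, X₀ ω ∂(Q : Measure Ω)) - ρ X₀)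
            ≤ ENNReal.ofReal (ε : ℝ) := ENNReal.ofReal_le_ofReal (by linarith)
        _ = (ε : ENNReal) := ENNReal.ofReal_coe_nnreal
    · intro X
      constructor
      · refine ⟨_, ⟨X, rfl⟩, ?_⟩
        have h1 : ∀ Q : {Q : Measure Ω // IsProbabilityMeasure Q ∧ Q ≪ P},
            ((∫ ω, X ω ∂(Q : Measure Ω) : ℝ) : EReal)
              - ((ENNReal.ofReal ((∫ ω, X ω ∂(Q : Measure Ω)) - ρ X) : ENNReal) : EReal)
            = ((min (∫ ω, X ω ∂(Q : Measure Ω))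
                ((∫ ω, X ω ∂(Q : Measure Ω)) - (∫ ω, X ω ∂(Q : Measure Ω)) + ρ X) : ℝ) : EReal) :=
          fun Q => EReal_term _ _ _
        rw [iSup_congr h1, iSup_coe_eq _ (ρ X) (fun Q => by
          refine le_trans (min_le_right _ _) (le_of_eq (by ring)))
          (fun ε hε => ?_)]
        rcases eq_or_ne (P {ω | ρ X - ε < X ω}) 0 with hnull | hpos
        · exfalso
          have := rho_le_of_ae_le hρ (ae_le_of_null X hnull)
          linarith
        · obtain ⟨Q, hQ⟩ := exists_Q_ge X hpos
          exact ⟨Q, le_min hQ (by linarith)⟩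
      · rintro y ⟨α, ⟨X₀, rfl⟩, rfl⟩
        have h1 : ∀ Q : {Q : Measure Ω // IsProbabilityMeasure Q ∧ Q ≪ P},
            ((∫ ω, X ω ∂(Q : Measure Ω) : ℝ) : EReal)
              - ((ENNReal.ofReal ((∫ ω, X₀ ω ∂(Q : Measure Ω)) - ρ X₀) : ENNReal) : EReal)
            = ((min (∫ ω, X ω ∂(Q : Measure Ω))
                ((∫ ω, X ω ∂(Q : Measure Ω)) - (∫ ω, X₀ ω ∂(Q : Measure Ω)) + ρ X₀) : ℝ) : EReal) :=
          fun Q => EReal_term _ _ _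
        rw [iSup_congr h1]
        refine coe_le_iSup_coe _ (ρ X) fun ε hε => ?_
        obtain ⟨Q, hq1, hq2⟩ := exists_Q_both hρ hss X X₀ hε
        exact ⟨Q, le_min hq1 hq2⟩
  · rintro ⟨Γ, -, -, hrep⟩ X l hl
    obtain ⟨⟨α, hαΓ, hval⟩, -⟩ := hrep (l • X)
    have hX : ((ρ X : ℝ) : EReal) ≤ ⨆ Q : {Q : Measure Ω // IsProbabilityMeasure Q ∧ Q ≪ P},
        ((∫ ω, X ω ∂(Q : Measure Ω) : ℝ) : EReal) - (α Q : EReal) :=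
      (hrep X).2 ⟨α, hαΓ, rfl⟩
    have key : ∀ c : ℝ, c < ρ X → l * c ≤ ρ (l • X) := by
      intro c hc
      have hcs := lt_of_lt_of_le (EReal.coe_lt_coe_iff.2 hc) hX
      rw [lt_iSup_iff] at hcs
      obtain ⟨Q, hQ⟩ := hcs
      haveI := Q.2.1
      have hαtop : α Q ≠ ⊤ := by
        intro h
        rw [h, EReal.coe_ennreal_top, EReal.sub_top] at hQ
        exact absurd hQ (by simp)
      set e : ℝ := ∫ ω, X ω ∂(Q : Measure Ω) with hedef
      set Areal : ℝ := (α Q).toReal with hAdef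
      have hA0 : 0 ≤ Areal := ENNReal.toReal_nonneg
      have hcoe : ((α Q : ENNReal) : EReal) = ((Areal : ℝ) : EReal) := by
        rw [hAdef, ← ENNReal.ofReal_toReal hαtop, EReal.coe_ennreal_ofReal,
          max_eq_left ENNReal.toReal_nonneg, ENNReal.toReal_ofReal ENNReal.toReal_nonneg]
      rw [hcoe, ← EReal.coe_sub] at hQ
      have hQr : c < e - Areal := EReal.coe_lt_coe_iff.1 hQ
      have hterm : ((l * e - Areal : ℝ) : EReal) ≤ ((ρ (l • X) : ℝ) : EReal) := by
        rw [hval]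
        have heq : ((∫ ω, (l • X : Lp ℝ ⊤ P) ω ∂(Q : Measure Ω) : ℝ) : EReal)
            - ((α Q : ENNReal) : EReal) = ((l * e - Areal : ℝ) : EReal) := by
          rw [integral_smul_coe X l Q.2.2, hcoe, ← EReal.coe_sub, ← hedef]
        exact heq ▸ le_iSup (fun Q : {Q : Measure Ω // IsProbabilityMeasure Q ∧ Q ≪ P} =>
          ((∫ ω, (l • X : Lp ℝ ⊤ P) ω ∂(Q : Measure Ω) : ℝ) : EReal) - (α Q : EReal)) Q
      have h7 := EReal.coe_le_coe_iff.1 hterm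
      nlinarith
    by_contra hcon
    push_neg at hcon
    have hl0 : (0:ℝ) < l := by linarith
    set c : ℝ := (ρ (l • X) + l * ρ X) / (2 * l) with hcdef
    have hc1 : c < ρ X := by
      rw [hcdef, div_lt_iff₀ (by linarith)]
      nlinarith
    have hc2 : ρ (l • X) < l * c := by
      have hlc : l * c = (ρ (l • X) + l * ρ X) / 2 := by
        rw [hcdef]
        field_simp
      rw [hlc]
      linarith
    exact absurd (key c hc1) (not_le.2 hc2)
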